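/- Let λ > 0 and a ∈ ℂ. The function u ↦ λ|u| + (1/2)|u − a|² has a unique minimizer over ℂ, equal to sgn(a)·max(|a| − λ, 0), where sgn(a) = a/|a| if a ≠ 0 and sgn(0) = 0. -/

import Mathlib

/-- Let `λ > 0` and `a ∈ ℂ`. The function `u ↦ λ|u| + (1/2)|u − a|²` has a unique minimizer
over `ℂ`, equal to `sgn(a) · max (|a| − λ) 0` where `sgn a = a/|a|` if `a ≠ 0` and
`sgn 0 = 0` (complex soft-thresholding). -/
theorem prox_complex_modulus (lam : ℝ) (hlam : 0 < lam) (a : ℂ) :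
    let f : ℂ → ℝ := fun u => lam * ‖u‖ + (1 / 2) * ‖u - a‖ ^ 2
    let p : ℂ := (if a = 0 then 0 else a / (‖a‖ : ℂ)) *
      ((max (‖a‖ - lam) 0 : ℝ) : ℂ)
    (∀ u, f p ≤ f u) ∧ (∀ u, (∀ w, f u ≤ f w) → u = p) := by
  intro f p
  have hre : ∀ u : ℂ, (u * (starRingEnd ℂ) a).re ≤ ‖u‖ * ‖a‖ := by
    intro u
    calc (u * (starRingEnd ℂ) a).re ≤ ‖u * (starRingEnd ℂ) a‖ :=
        Complex.re_le_norm _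
      _ = ‖u‖ * ‖a‖ := by rw [norm_mul, Complex.norm_conj]
  have fdef : ∀ u : ℂ, f u = lam * ‖u‖ +
      (1/2) * (‖u‖ ^ 2 - 2 * (u * (starRingEnd ℂ) a).re + ‖a‖ ^ 2) := by
    intro u
    simp only [f, Complex.sq_norm, Complex.normSq_sub]
    ring
  have key : ∀ u : ℂ, u ≠ p → f p < f u := by
    intro u hu
    by_cases hcase : ‖a‖ ≤ lam
    · -- small a : p = 0
      have hp0 : p = 0 := by
        simp only [p, max_eq_right (sub_nonpos.mpr hcase), Complex.ofReal_zero, mul_zero]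
      rw [hp0] at hu ⊢
      have habs : 0 < ‖u‖ := by
        rcases lt_or_eq_of_le (norm_nonneg u) with h | h
        · exact h
        · exact absurd (norm_eq_zero.mp h.symm) hu
      rw [fdef u, fdef 0]
      have h0 : ((0 : ℂ) * (starRingEnd ℂ) a).re = 0 := by simp
      rw [h0, norm_zero]
      have h1 := hre u
      have h2 : ‖u‖ * ‖a‖ ≤ ‖u‖ * lam :=
        mul_le_mul_of_nonneg_left hcase habs.le
      nlinarith [mul_pos habs habs]
    · -- large a
      push_neg at hcase
      set r := ‖a‖ with hr
      set t := r - lam with htdef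
      have ht : 0 < t := sub_pos.mpr hcase
      have hrpos : 0 < r := lt_trans hlam hcase
      have ha0 : a ≠ 0 := fun h => by simp [hr, h] at hrpos
      have hpdef : p = a / (r : ℂ) * (t : ℂ) := by
        simp only [p, if_neg ha0, max_eq_left (show (0:ℝ) ≤ ‖a‖ - lam from ht.le), htdef, hr]
      have hrc : (r : ℂ) ≠ 0 := by exact_mod_cast hrpos.ne'
      have hac : a * (starRingEnd ℂ) a = ((r * r : ℝ) : ℂ) := by
        rw [Complex.mul_conj]
        norm_cast
        rw [← Complex.sq_norm]; ring
      have hpconj : p * (starRingEnd ℂ) a = ((t * r : ℝ) : ℂ) := by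
        have hstep : p * (starRingEnd ℂ) a = (a * (starRingEnd ℂ) a) * (t : ℂ) / (r : ℂ) := by
          rw [hpdef]; ring
        rw [hstep, hac]
        push_cast
        field_simp
      have hpabs : ‖p‖ = t := by
        rw [hpdef, norm_mul, norm_div, Complex.norm_real, Real.norm_eq_abs, Complex.norm_real, Real.norm_eq_abs,
          abs_of_pos hrpos, abs_of_pos ht, ← hr, div_self hrpos.ne', one_mul]
      have hpre : (p * (starRingEnd ℂ) a).re = t * r := by
        rw [hpconj, Complex.ofReal_re]
      -- equality case forces u = p
      have hforce : (u * (starRingEnd ℂ) a).re = ‖u‖ * r →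
          ‖u‖ = t → u = p := by
        intro h1 h2
        have hab : ‖u * (starRingEnd ℂ) a‖ = ‖u‖ * r := by
          rw [norm_mul, Complex.norm_conj]
        set z := u * (starRingEnd ℂ) a with hz
        have hzre : z.re = ‖z‖ := by rw [h1, hab]
        have him : z.im = 0 := by
          have hsq : ‖z‖ ^ 2 = z.re ^ 2 + z.im ^ 2 := by
            rw [Complex.sq_norm, Complex.normSq_apply]; ring
          have hre2 : z.re ^ 2 = ‖z‖ ^ 2 := by rw [hzre]
          have him2 : z.im ^ 2 = 0 := by linarith
          exact pow_eq_zero_iff two_ne_zero |>.mp him2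
        have hzeq : z = ((‖u‖ * r : ℝ) : ℂ) :=
          Complex.ext (by simp [h1]) (by simp [him])
        have hz2 : u * (starRingEnd ℂ) a = p * (starRingEnd ℂ) a := by
          rw [← hz, hzeq, hpconj, h2, mul_comm t r]
        have hca : (starRingEnd ℂ) a ≠ 0 := by
          simpa using ha0
        exact mul_right_cancel₀ hca hz2
      have hstrict : (u * (starRingEnd ℂ) a).re < ‖u‖ * r ∨ ‖u‖ ≠ t := by
        by_contra h
        push_neg at h
        exact hu (hforce (le_antisymm (hre u) h.1) h.2)
      have hfp : f p = lam * t + (1/2) * (t ^ 2 - 2 * (t * r) + r ^ 2) := by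
        rw [fdef p, hpabs, hpre]
      rw [fdef u, hfp]
      rcases hstrict with h | h
      · rw [htdef]
        nlinarith [sq_nonneg (‖u‖ - (r - lam))]
      · have h2 : 0 < (‖u‖ - t) ^ 2 :=
          lt_of_le_of_ne (sq_nonneg _) (Ne.symm (pow_ne_zero 2 (sub_ne_zero.mpr h)))
        rw [htdef]
        rw [htdef] at h2
        nlinarith [hre u]
  constructor
  · intro u
    by_cases h : u = p
    · rw [h]
    · exact (key u h).le
  · intro u hmin
    by_contra h
    exact absurd (hmin p) (not_le.mpr (key u h))
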